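/- Let f: ℝⁿ → ℝ be κ̄-strongly convex, K-smooth, with L-Lipschitz Hessian, and let Ĥₜ be a symmetric matrix with Ĥₜ ⪰ κ̄I and Ĥₜ ⪰ H(θ^{k_t}) (the Hessian at an earlier iterate θ^{k_t}). Let p = Ĥₜ^{-1}∇f(θ^t). If 3κ̄(‖θ^t − θ*‖ + ‖θ^{k_t} − θ*‖) + ‖∇f(θ^t)‖ ≤ (3κ̄²/L)(1 − 2α), then f(θ^t − p) ≤ f(θ^t) − α pᵀ∇f(θ^t), i.e., the full step η = 1 satisfies the Armijo–Goldstein condition with parameter α ∈ (0, 1/2). -/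

import Mathlib

open InnerProductSpace
set_option maxHeartbeats 1000000


/-- The Hessian of `f` as a continuous linear map, `Hess f θ = D(∇f)(θ)`. -/
noncomputable def hess {n : ℕ} (f : EuclideanSpace ℝ (Fin n) → ℝ)
    (θ : EuclideanSpace ℝ (Fin n)) :
    EuclideanSpace ℝ (Fin n) →L[ℝ] EuclideanSpace ℝ (Fin n) :=
  fderiv ℝ (gradient f) θ

lemma taylor_aux {n : ℕ} (f : EuclideanSpace ℝ (Fin n) → ℝ) (hf : ContDiff ℝ 2 f)
    (L : ℝ) (hLip : ∀ θ θ' : EuclideanSpace ℝ (Fin n), ‖hess f θ - hess f θ'‖ ≤ L * ‖θ - θ'‖)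
    (x v : EuclideanSpace ℝ (Fin n)) :
    f (x + v) ≤ f x + (inner ℝ (gradient f x) v : ℝ)
      + (inner ℝ (hess f x v) v : ℝ) / 2 + L * ‖v‖ ^ 3 / 6 := by
  have hdf : Differentiable ℝ f := hf.differentiable (by norm_num)
  have hgd : Differentiable ℝ (gradient f) := by
    have h : ContDiff ℝ 1 (fderiv ℝ f) := hf.fderiv_right (by norm_num)
    have e : gradient f = fun y => (toDual ℝ (EuclideanSpace ℝ (Fin n))).symm (fderiv ℝ f y) := rfl
    rw [e]
    exact ((toDual ℝ (EuclideanSpace ℝ (Fin n))).symm.toContinuousLinearEquiv.differentiable).comp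
      (h.differentiable one_ne_zero)
  set c : ℝ := (inner ℝ (hess f x v) v : ℝ) with hc
  set M : ℝ := L * ‖v‖ ^ 3 with hM
  -- the line
  have hline : ∀ t : ℝ, HasDerivAt (fun s : ℝ => x + s • v) v t := by
    intro t
    simpa using ((hasDerivAt_id t).smul_const v).const_add x
  -- first derivative
  have hφ' : ∀ t : ℝ, HasDerivAt (fun s : ℝ => f (x + s • v))
      ((inner ℝ (gradient f (x + t • v)) v : ℝ)) t := by
    intro t
    have h1 := ((hdf (x + t • v)).hasGradientAt.hasFDerivAt).comp_hasDerivAt t (hline t)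
    exact h1.congr_deriv (by rw [InnerProductSpace.toDual_apply_apply])
  -- second derivative
  have hφ'' : ∀ t : ℝ, HasDerivAt (fun s : ℝ => (inner ℝ (gradient f (x + s • v)) v : ℝ))
      ((inner ℝ (hess f (x + t • v) v) v : ℝ)) t := by
    intro t
    have h1 : HasDerivAt (fun s : ℝ => gradient f (x + s • v)) (hess f (x + t • v) v) t :=
      by have := (hgd (x + t • v)).hasFDerivAt.comp_hasDerivAt t (hline t); exact this
    have h2 := h1.inner ℝ (hasDerivAt_const t v)
    simpa using h2
  -- Lipschitz bound on second derivative
  have hlip2 : ∀ t : ℝ, 0 ≤ t →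
      (inner ℝ (hess f (x + t • v) v) v : ℝ) - c ≤ M * t := by
    intro t ht
    have e1 : (inner ℝ (hess f (x + t • v) v) v : ℝ) - c
        = (inner ℝ ((hess f (x + t • v) - hess f x) v) v : ℝ) := by
      simp [c, ContinuousLinearMap.sub_apply, inner_sub_left]
    rw [e1]
    calc (inner ℝ ((hess f (x + t • v) - hess f x) v) v : ℝ)
        ≤ ‖(hess f (x + t • v) - hess f x) v‖ * ‖v‖ := real_inner_le_norm _ _
      _ ≤ (‖hess f (x + t • v) - hess f x‖ * ‖v‖) * ‖v‖ := by
          gcongr; exact (hess f (x + t • v) - hess f x).le_opNorm v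
      _ ≤ ((L * ‖x + t • v - x‖) * ‖v‖) * ‖v‖ := by
          have hv2 : (0:ℝ) ≤ ‖v‖ * ‖v‖ := mul_nonneg (norm_nonneg _) (norm_nonneg _)
          have := hLip (x + t • v) x
          nlinarith [norm_nonneg v]
      _ = M * t := by
          have : ‖x + t • v - x‖ = t * ‖v‖ := by
            simp [norm_smul, abs_of_nonneg ht]
          rw [this, hM]; ring
  -- ψ ≤ 0 on [0,1]
  set g0 : ℝ := (inner ℝ (gradient f x) v : ℝ) with hg0
  set ψ : ℝ → ℝ := fun t => (inner ℝ (gradient f (x + t • v)) v : ℝ) - g0 - t * c - M * t ^ 2 / 2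
    with hψdef
  have hψd : ∀ t : ℝ, HasDerivAt ψ
      ((inner ℝ (hess f (x + t • v) v) v : ℝ) - c - M * t) t := by
    intro t
    have h1 := hφ'' t
    have h2 : HasDerivAt (fun s : ℝ => g0 + s * c + M * s ^ 2 / 2) (c + M * t) t := by
      have := ((hasDerivAt_id t).mul_const c).const_add g0
      have h3 : HasDerivAt (fun s : ℝ => M * s ^ 2 / 2) (M * t) t := by
        have := ((hasDerivAt_pow 2 t).const_mul M).div_const 2
        simpa [mul_comm, mul_assoc, mul_div_assoc] using this
      exact (this.add h3).congr_deriv (by ring)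
    have hfun : ψ = fun s : ℝ => (inner ℝ (gradient f (x + s • v)) v : ℝ)
        - (g0 + s * c + M * s ^ 2 / 2) := by
      funext s; simp only [hψdef]; ring
    rw [hfun]
    exact (h1.sub h2).congr_deriv (by ring)
  have hψanti : AntitoneOn ψ (Set.Icc 0 1) := by
    apply antitoneOn_of_deriv_nonpos (convex_Icc 0 1)
    · exact fun t _ => (hψd t).continuousAt.continuousWithinAt
    · exact fun t _ => ((hψd t).differentiableAt).differentiableWithinAt
    · intro t ht
      rw [interior_Icc] at ht
      rw [(hψd t).deriv]
      have := hlip2 t ht.1.le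
      linarith
  have hψ0 : ψ 0 = 0 := by norm_num [hψdef, hg0]
  have hψle : ∀ t ∈ Set.Icc (0:ℝ) 1, ψ t ≤ 0 := by
    intro t ht
    have := hψanti (Set.left_mem_Icc.2 zero_le_one) ht ht.1
    rwa [hψ0] at this
  -- χ ≤ 0 at 1
  set χ : ℝ → ℝ := fun t => f (x + t • v) - f x - t * g0 - t ^ 2 / 2 * c - M * t ^ 3 / 6
    with hχdef
  have hχd : ∀ t : ℝ, HasDerivAt χ (ψ t) t := by
    intro t
    have h1 := hφ' t
    have h2 : HasDerivAt (fun s : ℝ => f x + s * g0 + s ^ 2 / 2 * c + M * s ^ 3 / 6)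
        (g0 + t * c + M * t ^ 2 / 2) t := by
      have ha := ((hasDerivAt_id t).mul_const g0).const_add (f x)
      have hb : HasDerivAt (fun s : ℝ => s ^ 2 / 2 * c) (t * c) t := by
        have := ((hasDerivAt_pow 2 t).div_const 2).mul_const c
        simpa [mul_comm, mul_div_assoc] using this
      have hcc : HasDerivAt (fun s : ℝ => M * s ^ 3 / 6) (M * t ^ 2 / 2) t := by
        have := ((hasDerivAt_pow 3 t).const_mul M).div_const 6
        exact this.congr_deriv (by norm_num <;> ring)
      exact ((ha.add hb).add hcc).congr_deriv (by ring)
    have hfun : χ = fun s : ℝ => f (x + s • v)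
        - (f x + s * g0 + s ^ 2 / 2 * c + M * s ^ 3 / 6) := by
      funext s; simp only [hχdef]; ring
    rw [hfun]
    exact (h1.sub h2).congr_deriv (by simp only [hψdef]; ring)
  have hχanti : AntitoneOn χ (Set.Icc 0 1) := by
    apply antitoneOn_of_deriv_nonpos (convex_Icc 0 1)
    · exact fun t _ => (hχd t).continuousAt.continuousWithinAt
    · exact fun t _ => ((hχd t).differentiableAt).differentiableWithinAt
    · intro t ht
      rw [interior_Icc] at ht
      rw [(hχd t).deriv]
      exact hψle t ⟨ht.1.le, ht.2.le⟩
  have h1 : χ 1 ≤ χ 0 :=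
    hχanti (Set.left_mem_Icc.2 zero_le_one) (Set.right_mem_Icc.2 zero_le_one) zero_le_one
  have hχ0 : χ 0 = 0 := by norm_num [hχdef]
  rw [hχ0] at h1
  have : χ 1 = f (x + v) - f x - g0 - c / 2 - M / 6 := by
    simp only [hχdef, one_smul, one_pow, one_mul]; ring
  rw [this] at h1
  linarith

/-- step-size-one phase for SHED.  With `Ĥₜ ⪰ κ̄I`, `Ĥₜ ⪰ H(θ^{kₜ})`
and `p = Ĥₜ⁻¹∇f(θᵗ)`, if
`3κ̄(‖θᵗ−θ*‖ + ‖θ^{kₜ}−θ*‖) + ‖∇f(θᵗ)‖ ≤ (3κ̄²/L)(1−2α)` then the full step `η = 1`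
satisfies the Armijo–Goldstein condition with parameter `α ∈ (0,1/2)`. -/
theorem stmt15 (n : ℕ) (f : EuclideanSpace ℝ (Fin n) → ℝ) (hf : ContDiff ℝ 2 f)
    (kbar K L : ℝ) (hk : 0 < kbar) (hK : 0 < K) (hL : 0 < L)
    (hsc : ∀ θ x : EuclideanSpace ℝ (Fin n), kbar * ‖x‖ ^ 2 ≤ (inner ℝ x (hess f θ x) : ℝ))
    (hsm : ∀ θ x : EuclideanSpace ℝ (Fin n), (inner ℝ x (hess f θ x) : ℝ) ≤ K * ‖x‖ ^ 2)
    (hLip : ∀ θ θ' : EuclideanSpace ℝ (Fin n), ‖hess f θ - hess f θ'‖ ≤ L * ‖θ - θ'‖)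
    (θstar : EuclideanSpace ℝ (Fin n)) (hmin : IsMinOn f Set.univ θstar)
    (hgrad0 : gradient f θstar = 0)
    (Hhat HhatInv : EuclideanSpace ℝ (Fin n) →L[ℝ] EuclideanSpace ℝ (Fin n))
    (hsa : IsSelfAdjoint Hhat)
    (hlb : ∀ x : EuclideanSpace ℝ (Fin n), kbar * ‖x‖ ^ 2 ≤ (inner ℝ x (Hhat x) : ℝ))
    (θk θt : EuclideanSpace ℝ (Fin n))
    (hdom : ∀ x : EuclideanSpace ℝ (Fin n),
      (inner ℝ x (hess f θk x) : ℝ) ≤ (inner ℝ x (Hhat x) : ℝ))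
    (hinv₁ : HhatInv.comp Hhat = ContinuousLinearMap.id ℝ _)
    (hinv₂ : Hhat.comp HhatInv = ContinuousLinearMap.id ℝ _)
    (α : ℝ) (hα : 0 < α ∧ α < 1 / 2)
    (hcond : 3 * kbar * (‖θt - θstar‖ + ‖θk - θstar‖) + ‖gradient f θt‖ ≤
      (3 * kbar ^ 2 / L) * (1 - 2 * α)) :
    f (θt - HhatInv (gradient f θt)) ≤
      f θt - α * (inner ℝ (HhatInv (gradient f θt)) (gradient f θt) : ℝ) := by
  set g : EuclideanSpace ℝ (Fin n) := gradient f θt with hg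
  set p : EuclideanSpace ℝ (Fin n) := HhatInv g with hp
  have hHp : Hhat p = g := by
    have := congrArg (fun T : EuclideanSpace ℝ (Fin n) →L[ℝ] EuclideanSpace ℝ (Fin n) => T g) hinv₂
    simpa using this
  set s : ℝ := (inner ℝ p g : ℝ) with hs
  set A : ℝ := ‖p‖ with hA
  set G : ℝ := ‖g‖ with hG
  set D : ℝ := ‖θt - θk‖ with hD
  -- basic bounds
  have h1 : kbar * A ^ 2 ≤ s := by
    have := hlb p; rwa [hHp] at this
  have hs0 : 0 ≤ s := le_trans (by positivity) h1
  have h2 : kbar * A ≤ G := by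
    rcases eq_or_lt_of_le (norm_nonneg p) with h | h
    · rw [hA, ← h, mul_zero]; exact hG ▸ norm_nonneg g
    · have hpg : s ≤ A * G := by
        calc s ≤ ‖p‖ * ‖g‖ := real_inner_le_norm p g
        _ = A * G := rfl
      have : kbar * A ^ 2 ≤ A * G := le_trans h1 hpg
      have hApos : 0 < A := h
      nlinarith
  have h3 : D ≤ ‖θt - θstar‖ + ‖θk - θstar‖ := by
    calc D = ‖(θt - θstar) - (θk - θstar)‖ := by rw [hD]; congr 1; abel
    _ ≤ ‖θt - θstar‖ + ‖θk - θstar‖ := norm_sub_le _ _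
  have h4 : L * (3 * kbar * (‖θt - θstar‖ + ‖θk - θstar‖) + G) ≤ 3 * kbar ^ 2 * (1 - 2 * α) := by
    calc L * (3 * kbar * (‖θt - θstar‖ + ‖θk - θstar‖) + G)
        ≤ L * (3 * kbar ^ 2 / L * (1 - 2 * α)) := by
          apply mul_le_mul_of_nonneg_left hcond hL.le
      _ = 3 * kbar ^ 2 * (1 - 2 * α) := by field_simp
  -- Hessian bound at θt
  have h5 : (inner ℝ p (hess f θt p) : ℝ) ≤ s + L * D * A ^ 2 := by
    have e1 : (inner ℝ p (hess f θt p) : ℝ) = (inner ℝ p (hess f θk p) : ℝ)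
        + (inner ℝ ((hess f θt - hess f θk) p) p : ℝ) := by
      simp only [ContinuousLinearMap.sub_apply, inner_sub_left]
      rw [real_inner_comm p (hess f θt p), real_inner_comm p (hess f θk p)]
      ring
    have e2 : (inner ℝ ((hess f θt - hess f θk) p) p : ℝ) ≤ L * D * A ^ 2 := by
      calc (inner ℝ ((hess f θt - hess f θk) p) p : ℝ)
          ≤ ‖(hess f θt - hess f θk) p‖ * ‖p‖ := real_inner_le_norm _ _
        _ ≤ (‖hess f θt - hess f θk‖ * ‖p‖) * ‖p‖ := by
            gcongr; exact (hess f θt - hess f θk).le_opNorm p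
        _ ≤ ((L * D) * ‖p‖) * ‖p‖ := by
            have h := hLip θt θk
            nlinarith [norm_nonneg p, norm_nonneg (hess f θt - hess f θk)]
        _ = L * D * A ^ 2 := by rw [hA]; ring
    have e3 : (inner ℝ p (hess f θk p) : ℝ) ≤ s := by
      have := hdom p; rwa [hHp] at this
    linarith
  -- Taylor bound with v = -p
  have htay := taylor_aux f hf L hLip θt (-p)
  rw [← sub_eq_add_neg] at htay
  simp only [map_neg, inner_neg_neg, inner_neg_right, inner_neg_left, neg_neg, norm_neg] at htay
  have e4 : (inner ℝ (gradient f θt) p : ℝ) = s := by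
    rw [hs, hg, real_inner_comm]
  have e5 : (inner ℝ (hess f θt p) p : ℝ) = (inner ℝ p (hess f θt p) : ℝ) := real_inner_comm _ _
  rw [e4, e5] at htay
  -- nonnegativity facts
  have hG0 : (0:ℝ) ≤ G := hG ▸ norm_nonneg g
  have hA0 : (0:ℝ) ≤ A := hA ▸ norm_nonneg p
  have hD0 : (0:ℝ) ≤ D := hD ▸ norm_nonneg _
  have hD'0 : (0:ℝ) ≤ ‖θt - θstar‖ + ‖θk - θstar‖ := by positivity
  -- key polynomial inequality
  have hp1 : 0 ≤ L * (‖θt - θstar‖ + ‖θk - θstar‖) * kbar * (s - kbar * A ^ 2) :=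
    mul_nonneg (mul_nonneg (mul_nonneg hL.le hD'0) hk.le) (by linarith)
  have hp2 : 0 ≤ L * kbar * A ^ 2 * (G - kbar * A) :=
    mul_nonneg (mul_nonneg (mul_nonneg hL.le hk.le) (sq_nonneg A)) (by linarith)
  have hp3 : 0 ≤ L * G * (s - kbar * A ^ 2) :=
    mul_nonneg (mul_nonneg hL.le hG0) (by linarith)
  have hp4 : 0 ≤ s * (3 * kbar ^ 2 * (1 - 2 * α)
      - L * (3 * kbar * (‖θt - θstar‖ + ‖θk - θstar‖) + G)) :=
    mul_nonneg hs0 (by linarith)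
  have hp5 : 0 ≤ L * kbar ^ 2 * A ^ 2 * ((‖θt - θstar‖ + ‖θk - θstar‖) - D) :=
    mul_nonneg (mul_nonneg (mul_nonneg hL.le (sq_nonneg kbar)) (sq_nonneg A)) (by linarith)
  have key : kbar ^ 2 * (3 * L * D * A ^ 2 + L * A ^ 3) ≤ kbar ^ 2 * ((3 - 6 * α) * s) := by
    nlinarith [hp1, hp2, hp3, hp4, hp5]
  have h6 : 3 * L * D * A ^ 2 + L * A ^ 3 ≤ (3 - 6 * α) * s :=
    le_of_mul_le_mul_left (by linarith) (pow_pos hk 2)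
  -- conclude
  linarith
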